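/- Fix n ≥ 3, 2 ≤ i ≤ n−1, and α, β ≥ 0 with α ≤ c + 2(−1+ε)β. Let x ∈ ℝ^n with y := Wx + θ satisfy: y_i = α; y_{i−1} ≤ β and y_{i+1} ≤ β; and y_k ≤ 0 for all k ∉ {i−1, i, i+1}. Then the i-th component of W applied to the vector field, namely w_i^⊤(−x + [y]_+) where w_i^⊤ is the i-th row of W, satisfies w_i^⊤(−x + [y]_+) = c − α + (−1+ε)([y_{i−1}]_+ + [y_{i+1}]_+) ≥ 0. (This shows the vector field points inward on the boundary {y_i = α} of the forward-invariant set R_FI^{(i)}.) -/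
import Mathlib


open Matrix

/-- vector field points inward on the boundary `y_i = α` of the
forward-invariant set `R_FI^{(i)}`. Indices are 0-based: `1 ≤ i` and
`i + 1 < n` correspond to the 1-based statement `2 ≤ i ≤ n−1`. -/
theorem cstln_inward_on_yi_boundary (n i : ℕ) (hn : 3 ≤ n)
    (hi1 : 1 ≤ i) (hi2 : i + 1 < n)
    (ε δ c : ℝ) (hε : 0 < ε) (hε1 : ε < 1) (hδ : 0 < δ) (hc : 0 < c)
    (W : Matrix (Fin n) (Fin n) ℝ)
    (hW : ∀ k l : Fin n, W k l =
      if (k : ℕ) = (l : ℕ) then 0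
      else if ((k : ℤ) - (l : ℤ)).natAbs = 1 then -1 + ε else -1 - δ)
    (α β : ℝ) (hα : 0 ≤ α) (hβ : 0 ≤ β)
    (hfeas : α ≤ c + 2 * (-1 + ε) * β)
    (x y : Fin n → ℝ) (hy : ∀ k, y k = W.mulVec x k + c)
    (hyi : y ⟨i, by omega⟩ = α)
    (hym : y ⟨i - 1, by omega⟩ ≤ β)
    (hyp : y ⟨i + 1, by omega⟩ ≤ β)
    (hoff : ∀ k : Fin n, (k : ℕ) ≠ i - 1 → (k : ℕ) ≠ i → (k : ℕ) ≠ i + 1 → y k ≤ 0) :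
    (∑ j, W ⟨i, by omega⟩ j * (-(x j) + max (y j) 0)) =
      c - α + (-1 + ε) * (max (y ⟨i - 1, by omega⟩) 0 + max (y ⟨i + 1, by omega⟩) 0) ∧
    0 ≤ ∑ j, W ⟨i, by omega⟩ j * (-(x j) + max (y j) 0) := by

  set I : Fin n := ⟨i, by omega⟩ with hI
  set Im : Fin n := ⟨i - 1, by omega⟩ with hIm
  set Ip : Fin n := ⟨i + 1, by omega⟩ with hIp
  have hWm : W I Im = -1 + ε := by
    rw [hW]; simp only [hI, hIm]
    rw [if_neg (by omega), if_pos (by omega)]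
  have hWp : W I Ip = -1 + ε := by
    rw [hW]; simp only [hI, hIp]
    rw [if_neg (by omega), if_pos (by omega)]
  have hsum1 : ∑ j, W I j * (-(x j)) = c - α := by
    have hmv : W.mulVec x I = α - c := by
      have := hy I
      rw [hyi] at this; linarith
    have : ∑ j, W I j * (-(x j)) = -(W.mulVec x I) := by
      simp [Matrix.mulVec, dotProduct, mul_neg]
    rw [this, hmv]; ring
  have hsum2 : ∑ j, W I j * max (y j) 0 =
      (-1 + ε) * max (y Im) 0 + (-1 + ε) * max (y Ip) 0 := by
    have : ∑ j, W I j * max (y j) 0 =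
        ∑ j, ((if j = Im then (-1 + ε) * max (y Im) 0 else 0)
            + (if j = Ip then (-1 + ε) * max (y Ip) 0 else 0)) := by
      apply Finset.sum_congr rfl
      intro j _
      by_cases hjm : j = Im
      · subst hjm
        rw [if_pos rfl, if_neg (show Im ≠ Ip by rw [hIm, hIp, Ne, Fin.mk.injEq]; omega), hWm]; ring
      · by_cases hjp : j = Ip
        · subst hjp
          rw [if_neg hjm, if_pos rfl, hWp]; ring
        · rw [if_neg hjm, if_neg hjp]
          by_cases hji : j = I
          · subst hji
            rw [hW, if_pos rfl, zero_mul, zero_add]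
          · have h1 : (j : ℕ) ≠ i - 1 := fun h => hjm (by simp [hIm, Fin.ext_iff, h])
            have h2 : (j : ℕ) ≠ i := fun h => hji (by simp [hI, Fin.ext_iff, h])
            have h3 : (j : ℕ) ≠ i + 1 := fun h => hjp (by simp [hIp, Fin.ext_iff, h])
            have := hoff j h1 h2 h3
            have : max (y j) 0 = 0 := max_eq_right this
            rw [this]; ring
    rw [this, Finset.sum_add_distrib, Finset.sum_ite_eq' , Finset.sum_ite_eq']
    simp
  have key : (∑ j, W I j * (-(x j) + max (y j) 0)) =
      c - α + (-1 + ε) * (max (y Im) 0 + max (y Ip) 0) := by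
    have : ∀ j, W I j * (-(x j) + max (y j) 0)
        = W I j * (-(x j)) + W I j * max (y j) 0 := fun j => by ring
    simp_rw [this, Finset.sum_add_distrib, hsum1, hsum2]
    ring
  refine ⟨key, ?_⟩
  rw [key]
  have bm : max (y Im) 0 ≤ β := max_le hym hβ
  have bp : max (y Ip) 0 ≤ β := max_le hyp hβ
  nlinarith [bm, bp, hfeas]
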